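/- Existence of a minimal equilibrium of the fair-exchange game: if every agent's benefit function b_i is continuous, nondecreasing, and concave on [0, ∞) and satisfies the vanishing-marginal-value condition, then there exists a nonnegative collection profile X_* that is a pure Nash equilibrium and such that for every pure Nash equilibrium X' and every agent i, t_i(X_*) ≤ t_i(X'). -/

import Mathlib

open Finset

/-- Agent `i`'s total accessible data under fair exchange. -/
noncomputable def total {n : ℕ} (X : Fin n → ℝ) (i : Fin n) : ℝ :=
  X i + ∑ j ∈ univ.filter (fun j => j ≠ i), min (X i) (X j)

/-- Agent `i`'s utility. -/
noncomputable def U {n : ℕ} (b : Fin n → ℝ → ℝ) (c : Fin n → ℝ)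
    (X : Fin n → ℝ) (i : Fin n) : ℝ :=
  b i (total X i) - c i * X i

/-- `X` is a (nonnegative) pure Nash equilibrium of the fair-exchange game. -/
def IsNE {n : ℕ} (b : Fin n → ℝ → ℝ) (c : Fin n → ℝ) (X : Fin n → ℝ) : Prop :=
  (∀ i, 0 ≤ X i) ∧
    ∀ i, ∀ y, 0 ≤ y → U b c (Function.update X i y) i ≤ U b c X i

namespace MinEqAux


/-- Chord slope comparison: far chord slope from `x` is at most near chord slope. -/
lemma chord_far_le {f : ℝ → ℝ} (hf : ConcaveOn ℝ (Set.Ici 0) f) {x y z : ℝ}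
    (hx : 0 ≤ x) (hxy : x < y) (hyz : y < z) :
    (f z - f x) / (z - x) ≤ (f y - f x) / (y - x) := by
  have h := hf.slope_anti_adjacent (Set.mem_Ici.2 hx)
      (Set.mem_Ici.2 (le_trans hx (le_of_lt (hxy.trans hyz)))) hxy hyz
  have hxy' : (0:ℝ) < y - x := by linarith
  have hyz' : (0:ℝ) < z - y := by linarith
  have hxz' : (0:ℝ) < z - x := by linarith
  rw [div_le_div_iff₀ hyz' hxy'] at h
  rw [div_le_div_iff₀ hxz' hxy']
  nlinarith

/-- Chord slope comparison: chord from a later start point is at most chord from earlier. -/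
lemma chord_left_le {f : ℝ → ℝ} (hf : ConcaveOn ℝ (Set.Ici 0) f) {x y z : ℝ}
    (hx : 0 ≤ x) (hxy : x < y) (hyz : y < z) :
    (f z - f y) / (z - y) ≤ (f z - f x) / (z - x) := by
  have h := hf.slope_anti_adjacent (Set.mem_Ici.2 hx)
      (Set.mem_Ici.2 (le_trans hx (le_of_lt (hxy.trans hyz)))) hxy hyz
  have hxy' : (0:ℝ) < y - x := by linarith
  have hyz' : (0:ℝ) < z - y := by linarith
  have hxz' : (0:ℝ) < z - x := by linarith
  rw [div_le_div_iff₀ hyz' hxy'] at h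
  rw [div_le_div_iff₀ hyz' hxz']
  nlinarith

/-- The set of totals from which all forward slopes of `f` are at most `κ`. -/
def Sset (f : ℝ → ℝ) (κ : ℝ) : Set ℝ :=
  {T | 0 ≤ T ∧ ∀ u, T < u → f u - f T ≤ κ * (u - T)}

noncomputable def Ept (f : ℝ → ℝ) (κ : ℝ) : ℝ := sInf (Sset f κ)

lemma Sset_bddBelow (f : ℝ → ℝ) (κ : ℝ) : BddBelow (Sset f κ) :=
  ⟨0, fun _ hT => hT.1⟩

lemma Sset_mono (f : ℝ → ℝ) {κ κ' : ℝ} (h : κ ≤ κ') : Sset f κ ⊆ Sset f κ' := by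
  rintro T ⟨h0, hT⟩
  exact ⟨h0, fun u hu => (hT u hu).trans (by nlinarith)⟩

lemma Sset_upward {f : ℝ → ℝ} (hf : ConcaveOn ℝ (Set.Ici 0) f) {κ T T' : ℝ}
    (hT : T ∈ Sset f κ) (hle : T ≤ T') : T' ∈ Sset f κ := by
  rcases eq_or_lt_of_le hle with rfl | hlt
  · exact hT
  obtain ⟨h0, hS⟩ := hT
  refine ⟨le_trans h0 hle, fun u hu => ?_⟩
  have h1 : (f u - f T') / (u - T') ≤ (f u - f T) / (u - T) :=
    chord_left_le hf h0 hlt hu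
  have h2 : f u - f T ≤ κ * (u - T) := hS u (hlt.trans hu)
  have hTu : (0:ℝ) < u - T := by linarith
  have hT'u : (0:ℝ) < u - T' := by linarith
  have h3 : (f u - f T) / (u - T) ≤ κ := by
    rw [div_le_iff₀ hTu]; linarith
  have h4 : (f u - f T') / (u - T') ≤ κ := h1.trans h3
  rw [div_le_iff₀ hT'u] at h4; linarith

lemma Sset_nonempty {f : ℝ → ℝ} (hf : ConcaveOn ℝ (Set.Ici 0) f) {κ : ℝ} (hκ : 0 < κ)
    (hvan : Filter.Tendsto (fun t : ℝ => f (t + 1) - f t) Filter.atTop (nhds 0)) :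
    (Sset f κ).Nonempty := by
  have h := hvan.eventually (gt_mem_nhds hκ)
  obtain ⟨T₀, hT₀⟩ := (h.and (Filter.eventually_ge_atTop (0:ℝ))).exists
  obtain ⟨hsl, hT₀0⟩ := hT₀
  refine ⟨T₀ + 1, by linarith, fun u hu => ?_⟩
  -- slope (T₀+1, u) ≤ slope (T₀, T₀+1) = f(T₀+1) - f T₀ < κ
  have h1 : (f u - f (T₀ + 1)) / (u - (T₀ + 1)) ≤ (f (T₀ + 1) - f T₀) / (T₀ + 1 - T₀) :=
    hf.slope_anti_adjacent (Set.mem_Ici.2 hT₀0) (Set.mem_Ici.2 (by linarith)) (by linarith) hu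
  have h2 : (f (T₀ + 1) - f T₀) / (T₀ + 1 - T₀) ≤ κ := by
    simpa using le_of_lt hsl
  have hu' : (0:ℝ) < u - (T₀ + 1) := by linarith
  have := (h1.trans h2)
  rw [div_le_iff₀ hu'] at this
  linarith

section EptFacts

variable {f : ℝ → ℝ} {κ : ℝ}
variable (hf : ConcaveOn ℝ (Set.Ici 0) f) (hcont : ContinuousOn f (Set.Ici 0))
  (hκ : 0 < κ)
  (hvan : Filter.Tendsto (fun t : ℝ => f (t + 1) - f t) Filter.atTop (nhds 0))

include hf hκ hvan in
lemma Ept_nonneg : 0 ≤ Ept f κ :=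
  le_csInf (Sset_nonempty hf hκ hvan) fun _ hT => hT.1

include hf hκ hvan hcont in
lemma Ept_mem : Ept f κ ∈ Sset f κ := by
  have hne := Sset_nonempty hf hκ hvan
  have hbdd := Sset_bddBelow f κ
  have hE0 : 0 ≤ Ept f κ := le_csInf hne fun _ hT => hT.1
  refine ⟨hE0, fun u hu => ?_⟩
  refine le_of_forall_pos_le_add fun ε hε => ?_
  have hcontE : ContinuousWithinAt f (Set.Ici 0) (Ept f κ) := hcont _ (Set.mem_Ici.2 hE0)
  have : ∀ᶠ T in nhdsWithin (Ept f κ) (Set.Ici 0), |f T - f (Ept f κ)| < ε := by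
    have := hcontE.tendsto (Metric.ball_mem_nhds (f (Ept f κ)) hε)
    filter_upwards [this] with T hT
    simpa [Metric.mem_ball, Real.dist_eq] using hT
  obtain ⟨δ, hδ, hball⟩ := Metric.mem_nhdsWithin_iff.1 this
  set a := min (Ept f κ + δ) u with ha
  have haE : Ept f κ < a := lt_min (by linarith) hu
  obtain ⟨T, hTS, hTa⟩ := (csInf_lt_iff hbdd hne).1 haE
  have hTE : Ept f κ ≤ T := csInf_le hbdd hTS
  have hT0 : 0 ≤ T := hTS.1
  have hTd : |f T - f (Ept f κ)| < ε := by
    refine hball ⟨?_, Set.mem_Ici.2 hT0⟩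
    rw [Metric.mem_ball, Real.dist_eq, abs_sub_lt_iff]
    constructor
    · have : T < Ept f κ + δ := lt_of_lt_of_le hTa (min_le_left _ _)
      linarith
    · linarith
  have hTu : T < u := lt_of_lt_of_le hTa (min_le_right _ _)
  have h1 : f u - f T ≤ κ * (u - T) := hTS.2 u hTu
  have habs := abs_sub_lt_iff.1 hTd
  nlinarith [habs.1, habs.2]

include hf hκ hvan hcont in
/-- Below `Ept`, backward slopes are at least `κ`. -/
lemma Ept_left {T s : ℝ} (hs0 : 0 ≤ s) (hsT : s < T) (hTE : T ≤ Ept f κ) :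
    κ * (T - s) ≤ f T - f s := by
  by_contra hcon
  push_neg at hcon
  have hT0 : 0 ≤ T := le_trans hs0 hsT.le
  have hcontT : ContinuousWithinAt f (Set.Ici 0) T := hcont _ (Set.mem_Ici.2 hT0)
  obtain ⟨η, hη, hηpos⟩ : ∃ η, η = κ * (T - s) - (f T - f s) ∧ 0 < η :=
    ⟨_, rfl, by linarith⟩
  have : ∀ᶠ T₂ in nhdsWithin T (Set.Ici 0), |f T₂ - f T| < η / 2 := by
    have := hcontT.tendsto (Metric.ball_mem_nhds (f T) (by linarith : (0:ℝ) < η / 2))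
    filter_upwards [this] with T₂ hT₂
    simpa [Metric.mem_ball, Real.dist_eq] using hT₂
  obtain ⟨δ, hδ, hball⟩ := Metric.mem_nhdsWithin_iff.1 this
  -- pick T₂ ∈ (s, T) with T - T₂ < min δ (η/(2κ))
  obtain ⟨δ', hδ', hδ'pos⟩ : ∃ d, d = min (min δ (η / (2 * κ))) (T - s) ∧ 0 < d :=
    ⟨_, rfl, lt_min (lt_min hδ (by positivity)) (by linarith)⟩
  obtain ⟨T₂, hT₂⟩ : ∃ x, x = T - δ' / 2 := ⟨_, rfl⟩
  have hsT₂ : s < T₂ := by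
    have : δ' ≤ T - s := hδ' ▸ min_le_right _ _
    rw [hT₂]; linarith
  have hT₂T : T₂ < T := by rw [hT₂]; linarith
  have hT₂0 : 0 ≤ T₂ := le_trans hs0 hsT₂.le
  have hfT₂ : |f T₂ - f T| < η / 2 := by
    refine hball ⟨?_, Set.mem_Ici.2 hT₂0⟩
    rw [Metric.mem_ball, Real.dist_eq]
    have h1 : δ' ≤ δ := hδ' ▸ le_trans (min_le_left _ _) (min_le_left _ _)
    rw [abs_sub_lt_iff]
    constructor <;> rw [hT₂] <;> linarith
  have hκT₂ : κ * (T - T₂) ≤ η / 2 := by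
    have h1 : δ' ≤ η / (2 * κ) := hδ' ▸ le_trans (min_le_left _ _) (min_le_right _ _)
    rw [le_div_iff₀ (by positivity : (0:ℝ) < 2 * κ)] at h1
    have hTT : T - T₂ = δ' / 2 := by rw [hT₂]; ring
    rw [hTT]
    nlinarith [hδ'pos.le]
  -- slope (s, T₂) < κ
  have hslope : f T₂ - f s < κ * (T₂ - s) := by
    have habs := (abs_sub_lt_iff.1 hfT₂).1
    have hrw := hη
    have e1 : κ * (T₂ - s) = κ * (T - s) - κ * (T - T₂) := by ring
    rw [e1]
    linarith
  -- T₂ ∈ Sset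
  have hT₂S : T₂ ∈ Sset f κ := by
    refine ⟨hT₂0, fun u hu => ?_⟩
    have h1 : (f u - f T₂) / (u - T₂) ≤ (f T₂ - f s) / (T₂ - s) :=
      hf.slope_anti_adjacent (Set.mem_Ici.2 hs0) (Set.mem_Ici.2 (le_trans hT₂0 hu.le)) hsT₂ hu
    have hpos1 : (0:ℝ) < T₂ - s := by linarith
    have hpos2 : (0:ℝ) < u - T₂ := by linarith
    have h2 : (f T₂ - f s) / (T₂ - s) ≤ κ := by
      rw [div_le_iff₀ hpos1]; linarith
    have := h1.trans h2
    rw [div_le_iff₀ hpos2] at this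
    linarith
  have : Ept f κ ≤ T₂ := csInf_le (Sset_bddBelow f κ) hT₂S
  linarith

include hf hvan in
lemma Ept_antitone {κ' : ℝ} (hκκ' : κ ≤ κ') (hκ : 0 < κ) : Ept f κ' ≤ Ept f κ :=
  csInf_le_csInf (Sset_bddBelow f κ') (Sset_nonempty hf hκ hvan) (Sset_mono f hκκ')

end EptFacts



variable {n : ℕ}

lemma total_eq_sum_min (X : Fin n → ℝ) (i : Fin n) :
    total X i = ∑ j ∈ univ, min (X i) (X j) := by
  unfold total
  rw [Finset.filter_ne' univ i, ← Finset.sum_erase_add univ _ (Finset.mem_univ i)]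
  simp

lemma total_update (X : Fin n → ℝ) (i : Fin n) (y : ℝ) :
    total (Function.update X i y) i
      = y + ∑ j ∈ univ.filter (fun j => j ≠ i), min y (X j) := by
  unfold total
  rw [Function.update_self]
  congr 1
  refine Finset.sum_congr rfl fun j hj => ?_
  rw [Function.update_of_ne (Finset.mem_filter.1 hj).2]

lemma total_nonneg (X : Fin n → ℝ) (hX : ∀ j, 0 ≤ X j) (i : Fin n) : 0 ≤ total X i :=
  add_nonneg (hX i) (Finset.sum_nonneg fun j _ => le_min (hX i) (hX j))

lemma total_le_total (X : Fin n → ℝ) {i j : Fin n} (h : X i ≤ X j) :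
    total X i ≤ total X j := by
  rw [total_eq_sum_min, total_eq_sum_min]
  exact Finset.sum_le_sum fun k _ => min_le_min h le_rfl

lemma total_lt_total (X : Fin n → ℝ) {i j : Fin n} (h : X i < X j) :
    total X i < total X j := by
  rw [total_eq_sum_min, total_eq_sum_min]
  have hij : i ≠ j := by intro e; rw [e] at h; exact lt_irrefl _ h
  apply Finset.sum_lt_sum (fun k _ => min_le_min h.le le_rfl)
  refine ⟨j, Finset.mem_univ j, ?_⟩
  rw [min_eq_left h.le, min_self]
  exact h

lemma total_lt_iff (X : Fin n → ℝ) {i j : Fin n} :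
    total X i < total X j ↔ X i < X j := by
  constructor
  · intro h
    by_contra hc
    push_neg at hc
    exact absurd (total_le_total X hc) (not_le.2 h)
  · exact total_lt_total X

lemma total_le_iff (X : Fin n → ℝ) {i j : Fin n} :
    total X i ≤ total X j ↔ X i ≤ X j := by
  constructor
  · intro h
    by_contra hc
    push_neg at hc
    exact absurd h (not_le.2 (total_lt_total X hc))
  · exact total_le_total X

/-- Any nonnegative vector is realizable as the vector of totals. -/
lemma exists_realization (hn : 1 ≤ n) (θ : Fin n → ℝ) (hθ : ∀ i, 0 ≤ θ i) :
    ∃ X : Fin n → ℝ, (∀ i, 0 ≤ X i) ∧ ∀ i, total X i = θ i := by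
  classical
  set σ := Tuple.sort θ with hσ
  have hg : Monotone (θ ∘ σ) := Tuple.monotone_sort θ
  set gN : ℕ → ℝ := fun s => if h : s < n then θ (σ ⟨s, h⟩) else 0 with hgN
  have hgN0 : ∀ s, 0 ≤ gN s := by
    intro s
    simp only [hgN]
    split
    · exact hθ _
    · exact le_rfl
  have hgNmono : ∀ a b : ℕ, a ≤ b → b < n → gN a ≤ gN b := by
    intro a b hab hb
    have ha : a < n := lt_of_le_of_lt hab hb
    simp only [hgN, dif_pos ha, dif_pos hb]
    exact hg (show (⟨a, ha⟩ : Fin n) ≤ ⟨b, hb⟩ from hab)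
  set d : ℕ → ℝ := fun s =>
    if s < n then (gN s - if s = 0 then 0 else gN (s - 1)) / ((n : ℝ) - s) else 0 with hd
  have hd0 : ∀ s, 0 ≤ d s := by
    intro s
    simp only [hd]
    split
    · rename_i hs
      apply div_nonneg
      · split
        · simpa using hgN0 s
        · rename_i hs0
          have : s - 1 ≤ s := Nat.sub_le s 1
          linarith [hgNmono (s-1) s this hs]
      · have : (s : ℝ) < n := by exact_mod_cast hs
        linarith
    · exact le_rfl
  set Y : ℕ → ℝ := fun k => ∑ s ∈ Finset.range (k + 1), d s with hY
  have hY0 : ∀ k, 0 ≤ Y k := fun k => Finset.sum_nonneg fun s _ => hd0 s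
  have hYmono : Monotone Y := by
    intro a b hab
    apply Finset.sum_le_sum_of_subset_of_nonneg
    · exact Finset.range_subset_range.2 (by omega)
    · intro s _ _; exact hd0 s
  have keyid : ∀ k, k < n → (∑ s ∈ Finset.range k, Y s) + ((n : ℝ) - k) * Y k = gN k := by
    intro k
    induction k with
    | zero =>
      intro h0
      have hn0 : (0:ℝ) < (n:ℝ) := by exact_mod_cast h0
      have hY0e : Y 0 = gN 0 / ((n:ℝ)) := by
        have : Y 0 = d 0 := by simp [hY]
        rw [this]
        show (if 0 < n then (gN 0 - if 0 = 0 then 0 else gN (0 - 1)) / ((n:ℝ) - ((0:ℕ):ℝ)) else 0) = gN 0 / ((n:ℝ))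
        rw [if_pos h0]
        norm_num
      simp only [Finset.range_zero, Finset.sum_empty, zero_add, hY0e, Nat.cast_zero]
      rw [sub_zero, mul_div_cancel₀ _ (by exact_mod_cast h0.ne' : (n:ℝ) ≠ 0)]
    | succ k ih =>
      intro hk1
      have hk : k < n := Nat.lt_of_succ_lt hk1
      have ihk := ih hk
      have hYs : Y (k+1) = Y k + d (k+1) := by
        simp only [hY, Finset.sum_range_succ]
      have hSs : (∑ s ∈ Finset.range (k+1), Y s) = (∑ s ∈ Finset.range k, Y s) + Y k :=
        Finset.sum_range_succ Y k
      have hdk : d (k+1) = (gN (k+1) - gN k) / ((n:ℝ) - (k+1)) := by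
        simp only [hd, if_pos hk1]
        norm_num
      have hne : (n:ℝ) - ((k:ℝ)+1) > 0 := by
        have : ((k:ℝ)+1) < (n:ℝ) := by exact_mod_cast hk1
        linarith
      rw [hSs, hYs, hdk]
      have expand : (∑ s ∈ Finset.range k, Y s) + Y k
            + ((n:ℝ) - ((k:ℕ)+1 : ℕ)) * (Y k + (gN (k+1) - gN k) / ((n:ℝ) - ((k:ℝ)+1)))
          = ((∑ s ∈ Finset.range k, Y s) + ((n : ℝ) - k) * Y k)
            + ((n:ℝ) - ((k:ℝ)+1)) * ((gN (k+1) - gN k) / ((n:ℝ) - ((k:ℝ)+1))) := by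
        push_cast
        ring
      rw [expand, ihk, mul_div_cancel₀ _ (ne_of_gt hne)]
      ring
  refine ⟨fun i => Y ((σ.symm i : Fin n) : ℕ), fun i => hY0 _, fun i => ?_⟩
  rw [total_eq_sum_min]
  have hre : ∑ j ∈ univ, min (Y ((σ.symm i : Fin n) : ℕ)) (Y ((σ.symm j : Fin n) : ℕ))
      = ∑ s : Fin n, min (Y ((σ.symm i : Fin n) : ℕ)) (Y (s : ℕ)) := by
    exact Fintype.sum_equiv σ.symm _ _ fun j => rfl
  rw [hre]
  set rv : ℕ := ((σ.symm i : Fin n) : ℕ) with hrv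
  have hrvn : rv < n := (σ.symm i).2
  have hmin : ∀ s : Fin n, min (Y rv) (Y (s:ℕ)) = Y (min rv (s:ℕ)) :=
    fun s => (hYmono.map_min).symm
  calc ∑ s : Fin n, min (Y rv) (Y (s : ℕ)) = ∑ s : Fin n, Y (min rv (s:ℕ)) := by
        exact Finset.sum_congr rfl fun s _ => hmin s
    _ = ∑ k ∈ Finset.range n, Y (min rv k) :=
        Fin.sum_univ_eq_sum_range (fun k => Y (min rv k)) n
    _ = (∑ k ∈ Finset.range rv, Y k) + ((n : ℝ) - rv) * Y rv := by
        rw [Finset.range_eq_Ico, ← Finset.sum_Ico_consecutive _ (Nat.zero_le rv) hrvn.le]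
        congr 1
        · rw [← Finset.range_eq_Ico]
          exact Finset.sum_congr rfl fun k hk => by
            rw [min_eq_right (Finset.mem_range.1 hk).le]
        · rw [Finset.sum_congr rfl (fun k hk => by
            rw [min_eq_left (Finset.mem_Ico.1 hk).1])]
          rw [Finset.sum_const, Nat.card_Ico]
          rw [nsmul_eq_mul, Nat.cast_sub hrvn.le]
    _ = gN rv := keyid rv hrvn
    _ = θ i := by
        simp only [hgN, dif_pos hrvn, hrv]
        congr 1
        simp
  


variable {n : ℕ}

/-- One plus the number of agents strictly above `i`. -/
noncomputable def Rc (X : Fin n → ℝ) (i : Fin n) : ℕ :=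
  (univ.filter fun j => X i < X j).card + 1

/-- The number of agents weakly above `i` (including `i`). -/
noncomputable def Lc (X : Fin n → ℝ) (i : Fin n) : ℕ :=
  (univ.filter fun j => X i ≤ X j).card

lemma Rc_pos (X : Fin n → ℝ) (i : Fin n) : 1 ≤ Rc X i := Nat.le_add_left 1 _

lemma Rc_le_n (X : Fin n → ℝ) (i : Fin n) : Rc X i ≤ n := by
  have hsub : (univ.filter fun j => X i < X j) ⊆ univ.erase i := by
    intro j hj
    rcases Finset.mem_filter.1 hj with ⟨_, hlt⟩
    refine Finset.mem_erase.2 ⟨fun e => ?_, Finset.mem_univ j⟩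
    rw [e] at hlt; exact lt_irrefl _ hlt
  have := Finset.card_le_card hsub
  rw [Finset.card_erase_of_mem (Finset.mem_univ i), Finset.card_univ, Fintype.card_fin] at this
  have hn : 0 < n := i.pos
  unfold Rc
  omega

lemma Lc_card (X : Fin n → ℝ) (i : Fin n) :
    Lc X i = (univ.filter fun j => j ≠ i ∧ X i ≤ X j).card + 1 := by
  unfold Lc
  have : (univ.filter fun j => X i ≤ X j)
      = insert i (univ.filter fun j => j ≠ i ∧ X i ≤ X j) := by
    ext j
    simp only [Finset.mem_filter, Finset.mem_univ, true_and, Finset.mem_insert]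
    constructor
    · intro h
      by_cases hji : j = i
      · exact Or.inl hji
      · exact Or.inr ⟨hji, h⟩
    · rintro (rfl | ⟨_, h⟩)
      · exact le_rfl
      · exact h
  rw [this, Finset.card_insert_of_notMem (by simp)]

lemma Lc_pos (X : Fin n → ℝ) (i : Fin n) : 1 ≤ Lc X i := by
  rw [Lc_card]; omega

lemma filter_up_erase (X : Fin n → ℝ) (i : Fin n) :
    (univ.filter fun j => j ≠ i ∧ X i < X j) = univ.filter fun j => X i < X j := by
  ext j
  simp only [Finset.mem_filter, Finset.mem_univ, true_and]
  constructor
  · exact fun h => h.2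
  · intro h
    exact ⟨fun e => by rw [e] at h; exact lt_irrefl _ h, h⟩

/-- Upper and lower bounds for an upward deviation. -/
lemma Tup_bound (X : Fin n → ℝ) (i : Fin n) {y : ℝ} (hy : X i < y) :
    total X i + (y - X i) ≤ total (Function.update X i y) i ∧
    total (Function.update X i y) i ≤ total X i + (Rc X i : ℝ) * (y - X i) := by
  rw [total_update]
  unfold total
  constructor
  · have : ∀ j ∈ univ.filter (fun j => j ≠ i), min (X i) (X j) ≤ min y (X j) :=
      fun j _ => min_le_min hy.le le_rfl
    have hs := Finset.sum_le_sum this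
    linarith
  · have hterm : ∀ j ∈ univ.filter (fun j => j ≠ i),
        min y (X j) ≤ min (X i) (X j) + (if X i < X j then y - X i else 0) := by
      intro j _
      by_cases h : X i < X j
      · rw [if_pos h, min_eq_left h.le]
        have : min y (X j) ≤ y := min_le_left _ _
        linarith
      · push_neg at h
        rw [if_neg (not_lt.2 h), min_eq_right h, min_eq_right (h.trans hy.le)]
        linarith
    have hs := Finset.sum_le_sum hterm
    rw [Finset.sum_add_distrib] at hs
    have hite : (∑ j ∈ univ.filter (fun j => j ≠ i), if X i < X j then y - X i else 0)
        = ((Rc X i : ℝ) - 1) * (y - X i) := by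
      rw [← Finset.sum_filter, Finset.filter_filter, filter_up_erase,
        Finset.sum_const, nsmul_eq_mul]
      have : ((univ.filter fun j => X i < X j).card : ℝ) = (Rc X i : ℝ) - 1 := by
        unfold Rc; push_cast; ring
      rw [this]
    rw [hite] at hs
    linarith

/-- Exact value of a small upward deviation. -/
lemma Tup_eq (X : Fin n → ℝ) (i : Fin n) {δ : ℝ}
    (hgap : ∀ j, X i < X j → X i + δ ≤ X j) (hδ : 0 ≤ δ) :
    total (Function.update X i (X i + δ)) i = total X i + (Rc X i : ℝ) * δ := by
  rw [total_update]
  unfold total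
  have hterm : ∀ j ∈ univ.filter (fun j => j ≠ i),
      min (X i + δ) (X j) = min (X i) (X j) + (if X i < X j then δ else 0) := by
    intro j _
    by_cases h : X i < X j
    · rw [if_pos h, min_eq_left (hgap j h), min_eq_left h.le]
    · push_neg at h
      rw [if_neg (not_lt.2 h), min_eq_right h, min_eq_right (by linarith), add_zero]
  rw [Finset.sum_congr rfl hterm, Finset.sum_add_distrib]
  have hite : (∑ j ∈ univ.filter (fun j => j ≠ i), if X i < X j then δ else 0)
      = ((Rc X i : ℝ) - 1) * δ := by
    rw [← Finset.sum_filter, Finset.filter_filter, filter_up_erase,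
      Finset.sum_const, nsmul_eq_mul]
    have : ((univ.filter fun j => X i < X j).card : ℝ) = (Rc X i : ℝ) - 1 := by
      unfold Rc; push_cast; ring
    rw [this]
  rw [hite]
  ring

/-- Lower bound on the loss of total from a downward deviation. -/
lemma Tdown_bound (X : Fin n → ℝ) (i : Fin n) {y : ℝ} (hy : y < X i) :
    (Lc X i : ℝ) * (X i - y) ≤ total X i - total (Function.update X i y) i := by
  rw [total_update]
  unfold total
  have hterm : ∀ j ∈ univ.filter (fun j => j ≠ i),
      min y (X j) + (if j ≠ i ∧ X i ≤ X j then X i - y else 0) ≤ min (X i) (X j) := by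
    intro j hj
    have hji : j ≠ i := (Finset.mem_filter.1 hj).2
    by_cases h : X i ≤ X j
    · rw [if_pos ⟨hji, h⟩, min_eq_left h, min_eq_left (le_trans hy.le h)]
      linarith
    · push_neg at h
      rw [if_neg (fun hc => absurd hc.2 (not_le.2 h))]
      have : min y (X j) ≤ min (X i) (X j) := min_le_min hy.le le_rfl
      linarith
  have hs := Finset.sum_le_sum hterm
  rw [Finset.sum_add_distrib] at hs
  have hite : (∑ j ∈ univ.filter (fun j => j ≠ i), if j ≠ i ∧ X i ≤ X j then X i - y else 0)
      = ((Lc X i : ℝ) - 1) * (X i - y) := by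
    rw [← Finset.sum_filter, Finset.filter_filter]
    have hset : (univ.filter fun j => (j ≠ i) ∧ (j ≠ i ∧ X i ≤ X j))
        = univ.filter fun j => j ≠ i ∧ X i ≤ X j := by
      apply Finset.filter_congr
      intro j _
      tauto
    rw [hset, Finset.sum_const, nsmul_eq_mul]
    have : ((univ.filter fun j => j ≠ i ∧ X i ≤ X j).card : ℝ) = (Lc X i : ℝ) - 1 := by
      rw [Lc_card]; push_cast; ring
    rw [this]
  rw [hite] at hs
  linarith

lemma total_update_nonneg (X : Fin n → ℝ) (i : Fin n) {y : ℝ}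
    (hX : ∀ j, 0 ≤ X j) (hy : 0 ≤ y) : 0 ≤ total (Function.update X i y) i := by
  rw [total_update]
  exact add_nonneg hy (Finset.sum_nonneg fun j _ => le_min hy (hX j))


lemma Rc_total (X : Fin n → ℝ) (i : Fin n) : Rc (fun j => total X j) i = Rc X i := by
  unfold Rc
  have h : (univ.filter fun j => (fun j => total X j) i < (fun j => total X j) j)
      = (univ.filter fun j => X i < X j) :=
    Finset.filter_congr fun j _ => total_lt_iff X
  rw [h]

lemma Lc_total (X : Fin n → ℝ) (i : Fin n) : Lc (fun j => total X j) i = Lc X i := by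
  unfold Lc
  have h : (univ.filter fun j => (fun j => total X j) i ≤ (fun j => total X j) j)
      = (univ.filter fun j => X i ≤ X j) :=
    Finset.filter_congr fun j _ => total_le_iff X
  rw [h]

lemma NE_mem_Sset {b : Fin n → ℝ → ℝ} {c : Fin n → ℝ} {X : Fin n → ℝ}
    (hbconc : ∀ i, ConcaveOn ℝ (Set.Ici 0) (b i))
    (hNE : IsNE b c X) (j : Fin n) :
    total X j ∈ Sset (b j) (c j / (Rc X j : ℝ)) := by
  have hX0 := hNE.1
  have ht0 : 0 ≤ total X j := total_nonneg X hX0 j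
  refine ⟨ht0, fun u hu => ?_⟩
  have hR1 : 1 ≤ Rc X j := Rc_pos X j
  have hRpos : (0:ℝ) < (Rc X j : ℝ) := by exact_mod_cast hR1
  have hstep : ∀ δ : ℝ, 0 ≤ δ → (∀ k, X j < X k → X j + δ ≤ X k) →
      b j (total X j + (Rc X j : ℝ) * δ) - b j (total X j) ≤ c j * δ := by
    intro δ hδ hgap
    have hy : 0 ≤ X j + δ := by linarith [hX0 j]
    have hNEj := hNE.2 j (X j + δ) hy
    unfold U at hNEj
    rw [Function.update_self, Tup_eq X j hgap hδ] at hNEj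
    linarith
  rcases (univ.filter fun k => X j < X k).eq_empty_or_nonempty with hPe | hPne
  · have hgap : ∀ k, X j < X k → X j + (u - total X j) ≤ X k := by
      intro k hk
      exact absurd (Finset.mem_filter.2 ⟨Finset.mem_univ k, hk⟩)
        (by rw [hPe]; exact Finset.notMem_empty k)
    have hR : Rc X j = 1 := by unfold Rc; rw [hPe]; simp
    have hs := hstep (u - total X j) (by linarith) hgap
    rw [hR] at hs ⊢
    have he : total X j + ((1:ℕ):ℝ) * (u - total X j) = u := by push_cast; ring
    rw [he] at hs
    have he2 : c j / ((1:ℕ):ℝ) * (u - total X j) = c j * (u - total X j) := by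
      push_cast; ring
    rw [he2]
    exact hs
  · have hPim : ((univ.filter fun k => X j < X k).image fun k => X k - X j).Nonempty :=
      hPne.image _
    set δ₀ := ((univ.filter fun k => X j < X k).image fun k => X k - X j).min' hPim with hδ₀
    have hδ₀pos : 0 < δ₀ := by
      obtain ⟨k, hkQ, hke⟩ := Finset.mem_image.1 (Finset.min'_mem _ hPim)
      rw [hδ₀, ← hke]
      linarith [(Finset.mem_filter.1 hkQ).2]
    have hgap : ∀ k, X j < X k → X j + δ₀ ≤ X k := by
      intro k hk
      have hk' : X k - X j ∈ (univ.filter fun k => X j < X k).image (fun k => X k - X j) :=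
        Finset.mem_image_of_mem _ (Finset.mem_filter.2 ⟨Finset.mem_univ k, hk⟩)
      have := Finset.min'_le _ _ hk'
      rw [← hδ₀] at this
      linarith
    by_cases hcase : u ≤ total X j + (Rc X j : ℝ) * δ₀
    · have hδpos : 0 < (u - total X j) / (Rc X j : ℝ) := div_pos (by linarith) hRpos
      have hδle : (u - total X j) / (Rc X j : ℝ) ≤ δ₀ := by
        rw [div_le_iff₀ hRpos]
        nlinarith
      have hgapδ : ∀ k, X j < X k → X j + (u - total X j) / (Rc X j : ℝ) ≤ X k := by
        intro k hk
        have := hgap k hk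
        linarith
      have hs := hstep _ hδpos.le hgapδ
      have he : total X j + (Rc X j:ℝ) * ((u - total X j) / (Rc X j : ℝ)) = u := by
        field_simp
        ring
      rw [he] at hs
      have he2 : c j * ((u - total X j) / (Rc X j : ℝ))
          = c j / (Rc X j : ℝ) * (u - total X j) := by ring
      rw [he2] at hs
      exact hs
    · push_neg at hcase
      have hmt : total X j < total X j + (Rc X j : ℝ) * δ₀ := by nlinarith
      have hstep0 := hstep δ₀ hδ₀pos.le hgap
      have hchord := chord_far_le (hbconc j) ht0 hmt hcase
      have h1 : (b j (total X j + (Rc X j : ℝ) * δ₀) - b j (total X j))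
            / (total X j + (Rc X j : ℝ) * δ₀ - total X j) ≤ c j / (Rc X j : ℝ) := by
        have he : total X j + (Rc X j:ℝ) * δ₀ - total X j = (Rc X j:ℝ) * δ₀ := by ring
        rw [he, div_le_div_iff₀ (by positivity) hRpos]
        nlinarith
      have h2 := le_trans hchord h1
      rw [div_le_iff₀ (by linarith : (0:ℝ) < u - total X j)] at h2
      linarith

section Steps

variable (E : Fin n → ℕ → ℝ)

/-- The admissible total-vectors for threshold family `E`. -/
def Adm : Set (Fin n → ℝ) := {θ | (∀ j, 0 ≤ θ j) ∧ ∀ j, E j (Rc θ j) ≤ θ j}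

/-- Pointwise infimum of the admissible set. -/
noncomputable def thetaStar : Fin n → ℝ := fun i => sInf ((fun θ => θ i) '' Adm E)

variable {E}

lemma Adm_bddBelow (i : Fin n) : BddBelow ((fun θ => θ i) '' Adm E) :=
  ⟨0, by rintro x ⟨θ, hθ, rfl⟩; exact hθ.1 i⟩

variable (hE0 : ∀ i (m : ℕ), 1 ≤ m → 0 ≤ E i m)
  (hEmono : ∀ i (m m' : ℕ), 1 ≤ m → m ≤ m' → E i m ≤ E i m')

include hE0 hEmono in
lemma Adm_nonempty : (Adm E).Nonempty := by
  refine ⟨fun i => E i n, fun j => hE0 j n ?_, fun j => hEmono j _ n (Rc_pos _ j) (Rc_le_n _ j)⟩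
  exact le_trans (Rc_pos (fun i => E i n) j) (Rc_le_n _ j)

include hE0 hEmono in
lemma Adm_img_nonempty (i : Fin n) : ((fun θ => θ i) '' Adm E).Nonempty :=
  (Adm_nonempty hE0 hEmono).image _

include hE0 hEmono in
lemma thetaStar_le {θ : Fin n → ℝ} (hθ : θ ∈ Adm E) (i : Fin n) : thetaStar E i ≤ θ i :=
  csInf_le (Adm_bddBelow i) ⟨θ, hθ, rfl⟩

include hE0 hEmono in
lemma thetaStar_nonneg (i : Fin n) : 0 ≤ thetaStar E i :=
  le_csInf (Adm_img_nonempty hE0 hEmono i) (by rintro x ⟨θ, hθ, rfl⟩; exact hθ.1 i)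

include hE0 hEmono in
lemma thetaStar_mem : thetaStar E ∈ Adm E := by
  refine ⟨thetaStar_nonneg hE0 hEmono, fun i => ?_⟩
  by_contra hcon
  push_neg at hcon
  obtain ⟨ε, hεpos, hεE, hεgap⟩ :
      ∃ ε : ℝ, 0 < ε ∧ thetaStar E i + ε ≤ E i (Rc (thetaStar E) i) ∧
        ∀ j, thetaStar E i < thetaStar E j → thetaStar E i + ε ≤ thetaStar E j := by
    rcases (univ.filter fun j => thetaStar E i < thetaStar E j).eq_empty_or_nonempty with
      hQe | hQne
    · refine ⟨E i (Rc (thetaStar E) i) - thetaStar E i, by linarith, by linarith,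
        fun j hj => absurd ?_ (Finset.notMem_empty j)⟩
      rw [← hQe]
      exact Finset.mem_filter.2 ⟨Finset.mem_univ j, hj⟩
    · have hQim : ((univ.filter fun j => thetaStar E i < thetaStar E j).image
          fun j => thetaStar E j - thetaStar E i).Nonempty := hQne.image _
      set gap := ((univ.filter fun j => thetaStar E i < thetaStar E j).image
          fun j => thetaStar E j - thetaStar E i).min' hQim with hgap
      have hgappos : 0 < gap := by
        obtain ⟨j, hjQ, hje⟩ := Finset.mem_image.1 (Finset.min'_mem _ hQim)
        rw [hgap, ← hje]
        have := (Finset.mem_filter.1 hjQ).2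
        linarith
      refine ⟨min gap (E i (Rc (thetaStar E) i) - thetaStar E i),
        lt_min hgappos (by linarith), by
          have := min_le_right gap (E i (Rc (thetaStar E) i) - thetaStar E i); linarith,
        fun j hj => ?_⟩
      have h1 : gap ≤ thetaStar E j - thetaStar E i :=
        Finset.min'_le _ _ (Finset.mem_image.2
          ⟨j, Finset.mem_filter.2 ⟨Finset.mem_univ j, hj⟩, rfl⟩)
      have := min_le_left gap (E i (Rc (thetaStar E) i) - thetaStar E i)
      linarith
  obtain ⟨x, ⟨θ, hθAdm, rfl⟩, hx⟩ :=
    (csInf_lt_iff (Adm_bddBelow i) (Adm_img_nonempty hE0 hEmono i)).1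
      (show thetaStar E i < thetaStar E i + ε by linarith)
  have hsub : (univ.filter fun j => thetaStar E i < thetaStar E j)
      ⊆ univ.filter fun j => θ i < θ j := by
    intro j hj
    refine Finset.mem_filter.2 ⟨Finset.mem_univ j, ?_⟩
    have h1 := hεgap j (Finset.mem_filter.1 hj).2
    have h2 := thetaStar_le hE0 hEmono hθAdm j
    linarith
  have hcard : Rc (thetaStar E) i ≤ Rc θ i :=
    Nat.add_le_add_right (Finset.card_le_card hsub) 1
  have h3 : E i (Rc (thetaStar E) i) ≤ E i (Rc θ i) :=
    hEmono i _ _ (Rc_pos _ i) hcard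
  have h4 := hθAdm.2 i
  linarith

include hE0 hEmono in
lemma thetaStar_upper (i : Fin n) : thetaStar E i ≤ E i (Lc (thetaStar E) i) := by
  by_contra hcon
  push_neg at hcon
  -- the replacement value for coordinate i
  set θ := thetaStar E with hθdef
  have hL1 : 1 ≤ Lc θ i := Lc_pos θ i
  obtain ⟨t₀, ht₀E, ht₀lt, ht₀low⟩ :
      ∃ t₀ : ℝ, E i (Lc θ i) ≤ t₀ ∧ t₀ < θ i ∧ ∀ j, θ j < θ i → θ j ≤ t₀ := by
    rcases (univ.filter fun j => θ j < θ i).eq_empty_or_nonempty with hle | hlne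
    · refine ⟨E i (Lc θ i), le_rfl, hcon, fun j hj => absurd ?_ (Finset.notMem_empty j)⟩
      rw [← hle]
      exact Finset.mem_filter.2 ⟨Finset.mem_univ j, hj⟩
    · have him : ((univ.filter fun j => θ j < θ i).image θ).Nonempty := hlne.image _
      refine ⟨max (E i (Lc θ i)) (((univ.filter fun j => θ j < θ i).image θ).max' him),
        le_max_left _ _, ?_, fun j hj => ?_⟩
      · apply max_lt hcon
        rw [Finset.max'_lt_iff]
        rintro x hx
        obtain ⟨j, hjm, rfl⟩ := Finset.mem_image.1 hx
        exact (Finset.mem_filter.1 hjm).2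
      · exact le_trans (Finset.le_max' _ _ (Finset.mem_image.2
          ⟨j, Finset.mem_filter.2 ⟨Finset.mem_univ j, hj⟩, rfl⟩)) (le_max_right _ _)
  have ht₀0 : 0 ≤ t₀ := le_trans (hE0 i _ hL1) ht₀E
  set θ' := Function.update θ i t₀ with hθ'def
  have hθ'Adm : θ' ∈ Adm E := by
    constructor
    · intro j
      by_cases hji : j = i
      · rw [hji, hθ'def, Function.update_self]; exact ht₀0
      · rw [hθ'def, Function.update_of_ne hji]
        exact (thetaStar_mem hE0 hEmono).1 j
    · intro j
      by_cases hji : j = i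
      · -- at i : Rc θ' i = Lc θ i
        subst hji
        have hθ'j : θ' j = t₀ := Function.update_self _ _ _
        have hfe : (univ.filter fun k => θ' j < θ' k)
            = univ.filter fun k => k ≠ j ∧ θ j ≤ θ k := by
          apply Finset.filter_congr
          intro k _
          by_cases hkj : k = j
          · subst hkj
            simp [hθ'j]
          · rw [show θ' k = θ k from Function.update_of_ne hkj _ _, hθ'j]
            constructor
            · intro hlt
              refine ⟨hkj, ?_⟩
              by_contra hc
              push_neg at hc
              exact absurd (ht₀low k hc) (not_le.2 hlt)
            · rintro ⟨_, hge⟩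
              linarith
        have hRc' : Rc θ' j = Lc θ j := by
          unfold Rc
          rw [hfe, ← Lc_card]
        rw [hRc', hθ'j]
        exact ht₀E
      · rw [show θ' j = θ j from Function.update_of_ne hji _ _]
        have hsub : (univ.filter fun k => θ' j < θ' k) ⊆ univ.filter fun k => θ j < θ k := by
          intro k hk
          have hk' := (Finset.mem_filter.1 hk).2
          refine Finset.mem_filter.2 ⟨Finset.mem_univ k, ?_⟩
          by_cases hki : k = i
          · subst hki
            rw [show θ' j = θ j from Function.update_of_ne hji _ _,
              show θ' k = t₀ from Function.update_self _ _ _] at hk'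
            linarith
          · rwa [show θ' j = θ j from Function.update_of_ne hji _ _,
              show θ' k = θ k from Function.update_of_ne hki _ _] at hk'
        have hcard : Rc θ' j ≤ Rc θ j := Nat.add_le_add_right (Finset.card_le_card hsub) 1
        exact le_trans (hEmono j _ _ (Rc_pos _ j) hcard) ((thetaStar_mem hE0 hEmono).2 j)
  have := thetaStar_le hE0 hEmono hθ'Adm i
  rw [hθ'def, Function.update_self] at this
  linarith

end Steps

end MinEqAux

/-- Existence of a minimal equilibrium: there is a pure Nash equilibrium `X_*` whose
total-data vector is componentwise dominated by that of every pure Nash equilibrium. -/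
theorem exists_minimal_equilibrium (n : ℕ) (hn : 1 ≤ n)
    (b : Fin n → ℝ → ℝ) (c : Fin n → ℝ)
    (hc : ∀ i, 0 < c i)
    (hbc : ∀ i, ContinuousOn (b i) (Set.Ici 0))
    (hbm : ∀ i, MonotoneOn (b i) (Set.Ici 0))
    (hbconc : ∀ i, ConcaveOn ℝ (Set.Ici 0) (b i))
    (hvanish : ∀ i, Filter.Tendsto (fun t : ℝ => b i (t + 1) - b i t)
      Filter.atTop (nhds 0)) :
    ∃ Xstar : Fin n → ℝ, IsNE b c Xstar ∧
      ∀ X' : Fin n → ℝ, IsNE b c X' → ∀ i, total Xstar i ≤ total X' i := by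
  classical
  have hcm : ∀ (i : Fin n) (m : ℕ), 1 ≤ m → 0 < c i / (m : ℝ) := by
    intro i m hm
    apply div_pos (hc i)
    exact_mod_cast Nat.lt_of_lt_of_le Nat.zero_lt_one hm
  set E : Fin n → ℕ → ℝ := fun i m => MinEqAux.Ept (b i) (c i / (m:ℝ)) with hEdef
  have hE0 : ∀ i (m:ℕ), 1 ≤ m → 0 ≤ E i m := fun i m hm =>
    MinEqAux.Ept_nonneg (hbconc i) (hcm i m hm) (hvanish i)
  have hEmem : ∀ i (m:ℕ), 1 ≤ m → E i m ∈ MinEqAux.Sset (b i) (c i / (m:ℝ)) := fun i m hm =>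
    MinEqAux.Ept_mem (hbconc i) (hbc i) (hcm i m hm) (hvanish i)
  have hEmono : ∀ i (m m':ℕ), 1 ≤ m → m ≤ m' → E i m ≤ E i m' := by
    intro i m m' hm hmm'
    have hm' : (1:ℕ) ≤ m' := le_trans hm hmm'
    have hmR : (0:ℝ) < (m:ℝ) := by exact_mod_cast Nat.lt_of_lt_of_le Nat.zero_lt_one hm
    have hmm'R : (m:ℝ) ≤ (m':ℝ) := by exact_mod_cast hmm'
    have h2 : c i / (m':ℝ) ≤ c i / (m:ℝ) := by
      apply div_le_div_of_nonneg_left (hc i).le hmR hmm'R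
    exact MinEqAux.Ept_antitone (hbconc i) (hvanish i) h2 (hcm i m' hm')
  set θs := MinEqAux.thetaStar E with hθsdef
  have hθsAdm := MinEqAux.thetaStar_mem hE0 hEmono
  have hθs0 : ∀ i, 0 ≤ θs i := MinEqAux.thetaStar_nonneg hE0 hEmono
  have hθsUp := MinEqAux.thetaStar_upper hE0 hEmono
  obtain ⟨X, hX0, hXt⟩ := MinEqAux.exists_realization hn θs hθs0
  have hXθ : (fun j => total X j) = θs := funext hXt
  have hRcX : ∀ i, MinEqAux.Rc θs i = MinEqAux.Rc X i := by
    intro i; rw [← hXθ]; exact MinEqAux.Rc_total X i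
  have hLcX : ∀ i, MinEqAux.Lc θs i = MinEqAux.Lc X i := by
    intro i; rw [← hXθ]; exact MinEqAux.Lc_total X i
  refine ⟨X, ⟨hX0, ?_⟩, ?_⟩
  · -- Nash equilibrium
    intro i y hy
    have hU1 : U b c (Function.update X i y) i
        = b i (total (Function.update X i y) i) - c i * y := by
      unfold U; rw [Function.update_self]
    have hU2 : U b c X i = b i (θs i) - c i * X i := by unfold U; rw [hXt i]
    rw [hU1, hU2]
    rcases lt_trichotomy y (X i) with hlt | heq | hgt
    · -- downward deviation
      have hL1 : 1 ≤ MinEqAux.Lc X i := MinEqAux.Lc_pos X i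
      have hLpos : (0:ℝ) < (MinEqAux.Lc X i : ℝ) := by exact_mod_cast hL1
      have hTy0 : 0 ≤ total (Function.update X i y) i :=
        MinEqAux.total_update_nonneg X i hX0 hy
      have hdown := MinEqAux.Tdown_bound X i hlt
      rw [hXt i] at hdown
      have hsT : total (Function.update X i y) i < θs i := by nlinarith
      have hTE : θs i ≤ MinEqAux.Ept (b i) (c i / (MinEqAux.Lc X i : ℝ)) := by
        have h := hθsUp i
        rw [hLcX i] at h
        exact h
      have hleft := MinEqAux.Ept_left (hbconc i) (hbc i) (hcm i _ hL1) (hvanish i)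
        hTy0 hsT hTE
      have hfrac : (0:ℝ) ≤ c i / (MinEqAux.Lc X i : ℝ) := le_of_lt (hcm i _ hL1)
      have h1 : (c i / (MinEqAux.Lc X i : ℝ)) * ((MinEqAux.Lc X i : ℝ) * (X i - y))
          ≤ (c i / (MinEqAux.Lc X i : ℝ)) * (θs i - total (Function.update X i y) i) :=
        mul_le_mul_of_nonneg_left hdown hfrac
      rw [← mul_assoc, div_mul_cancel₀ _ (ne_of_gt hLpos)] at h1
      linarith
    · rw [heq, Function.update_eq_self, hXt i]
    · -- upward deviation
      have hR1 : 1 ≤ MinEqAux.Rc X i := MinEqAux.Rc_pos X i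
      have hRpos : (0:ℝ) < (MinEqAux.Rc X i : ℝ) := by exact_mod_cast hR1
      have hup := MinEqAux.Tup_bound X i hgt
      rw [hXt i] at hup
      have hTygt : θs i < total (Function.update X i y) i := by
        have := hup.1; linarith
      have hmemS : θs i ∈ MinEqAux.Sset (b i) (c i / (MinEqAux.Rc X i : ℝ)) := by
        apply MinEqAux.Sset_upward (hbconc i) (hEmem i _ hR1)
        have h := hθsAdm.2 i
        rw [hRcX i] at h
        exact h
      have hb := hmemS.2 _ hTygt
      have hfrac : (0:ℝ) ≤ c i / (MinEqAux.Rc X i : ℝ) := le_of_lt (hcm i _ hR1)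
      have h2 : (c i / (MinEqAux.Rc X i : ℝ)) * (total (Function.update X i y) i - θs i)
          ≤ (c i / (MinEqAux.Rc X i : ℝ)) * ((MinEqAux.Rc X i : ℝ) * (y - X i)) :=
        mul_le_mul_of_nonneg_left (by linarith [hup.2]) hfrac
      rw [← mul_assoc, div_mul_cancel₀ _ (ne_of_gt hRpos)] at h2
      linarith
  · -- minimality
    intro X' hNE i
    rw [hXt i]
    refine MinEqAux.thetaStar_le hE0 hEmono (θ := fun j => total X' j) ⟨?_, ?_⟩ i
    · exact fun j => MinEqAux.total_nonneg X' hNE.1 j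
    · intro j
      rw [MinEqAux.Rc_total X' j]
      exact csInf_le (MinEqAux.Sset_bddBelow _ _) (MinEqAux.NE_mem_Sset hbconc hNE j)
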